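/- Let K be a hexagonal trefoil knot with the Huh–Jeon pattern. With L2 = P3 ∩ P6 the quadrisecant meeting e23, e34, e56, e61, the point p²₂₃ = L2 ∩ e23 lies in the open half-space P5⁻ (the side of the plane P5 containing v3). -/

import Mathlib

noncomputable section

/-- Points of ℝ³. -/
abbrev E3 : Type := Fin 3 → ℝ

/-- A line in ℝ³: the affine span of two distinct points, viewed as a set. -/
def IsLine (L : Set E3) : Prop :=
  ∃ p q : E3, p ≠ q ∧ L = (affineSpan ℝ ({p, q} : Set E3) : Set E3)

/-- A plane: an affine subspace of dimension 2. -/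
def IsPlane (P : AffineSubspace ℝ E3) : Prop :=
  Module.finrank ℝ P.direction = 2

/-- A (combinatorial) hexagon: six vertices in ℝ³, joined cyclically.
Paper vertex `v_i` corresponds to `v (i-1)`, paper edge `e_{i,i+1}` to `edge (i-1)`,
paper disk `Δ_i` to `disk (i-1)`, paper plane `P_i` to `P (i-1)`. -/
structure Hexagon where
  v : Fin 6 → E3

namespace Hexagon

variable (H : Hexagon)

/-- The closed edge from `v i` to `v (i+1)`. -/
def edge (i : Fin 6) : Set E3 := segment ℝ (H.v i) (H.v (i + 1))

/-- The open edge (interior of the edge) from `v i` to `v (i+1)`. -/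
def intEdge (i : Fin 6) : Set E3 := openSegment ℝ (H.v i) (H.v (i + 1))

/-- The hexagonal closed polygonal curve: union of the six edges. -/
def K : Set E3 := ⋃ i, H.edge i

/-- The triangular disk with vertices `v (i-1)`, `v i`, `v (i+1)`. -/
def disk (i : Fin 6) : Set E3 := convexHull ℝ ({H.v (i - 1), H.v i, H.v (i + 1)} : Set E3)

/-- The plane through `v (i-1)`, `v i`, `v (i+1)`. -/
def P (i : Fin 6) : AffineSubspace ℝ E3 :=
  affineSpan ℝ ({H.v (i - 1), H.v i, H.v (i + 1)} : Set E3)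

/-- General position: no three vertices collinear, no four vertices coplanar. -/
def GeneralPosition : Prop :=
  (∀ i j k : Fin 6, i ≠ j → i ≠ k → j ≠ k →
    ¬ Collinear ℝ ({H.v i, H.v j, H.v k} : Set E3)) ∧
  (∀ i j k l : Fin 6, i ≠ j → i ≠ k → i ≠ l → j ≠ k → j ≠ l → k ≠ l →
    ¬ Coplanar ℝ ({H.v i, H.v j, H.v k, H.v l} : Set E3))

/-- The Huh–Jeon intersection pattern: the only nonempty intersections of open edges with
interiors of triangular disks are `int e23 ∩ int Δ5`, `int e23 ∩ int Δ6`, `int e45 ∩ int Δ1`,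
`int e45 ∩ int Δ2`, `int e61 ∩ int Δ3`, `int e61 ∩ int Δ4` (in the paper's labels). -/
def HuhJeon : Prop :=
  ∀ i j : Fin 6, (H.intEdge i ∩ intrinsicInterior ℝ (H.disk j)).Nonempty ↔
    (i, j) ∈ ({(1, 4), (1, 5), (3, 0), (3, 1), (5, 2), (5, 3)} : Set (Fin 6 × Fin 6))

/-- The candidate quadrisecant line `L_{k+1}` of the paper: the intersection of the planes
`P (k+1)` and `P (k+4)` (for `k = 0, 1, 2`).  `QLine 0` is the paper's `L₁ = P₂ ∩ P₅`,
`QLine 1` is `L₂ = P₃ ∩ P₆`, and `QLine 2` is `L₃ = P₄ ∩ P₁`. -/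
def QLine (k : Fin 6) : Set E3 := (H.P (k + 1) : Set E3) ∩ (H.P (k + 4) : Set E3)

end Hexagon

/-- `L` is a quadrisecant of the curve `K`: a line meeting `K` in at least four points. -/
def IsQuadrisecantOf (K L : Set E3) : Prop :=
  IsLine L ∧ ∃ S : Finset E3, S.card = 4 ∧ (S : Set E3) ⊆ K ∩ L

/-- A quadrisecant of the hexagonal knot `H`. -/
def Hexagon.IsQuadrisecant (H : Hexagon) (L : Set E3) : Prop :=
  IsQuadrisecantOf H.K L

/-- A standard parametrization of the trefoil knot. -/
def trefoilCurve (t : ℝ) : E3 :=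
  ![Real.sin t + 2 * Real.sin (2 * t), Real.cos t - 2 * Real.cos (2 * t), - Real.sin (3 * t)]

/-- The standard trefoil knot as a subset of ℝ³. -/
def TrefoilSet : Set E3 := Set.range trefoilCurve

/-- The standard planar round circle (the unknot). -/
def UnknotSet : Set E3 := {x : E3 | x 0 ^ 2 + x 1 ^ 2 = 1 ∧ x 2 = 0}

/-- Two subsets of ℝ³ are equivalent as knots if there is an ambient isotopy of ℝ³
carrying one onto the other. -/
def KnotEquiv (K₁ K₂ : Set E3) : Prop :=
  ∃ F : ℝ → (E3 ≃ₜ E3), Continuous (fun p : ℝ × E3 => F p.1 p.2) ∧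
    F 0 = Homeomorph.refl E3 ∧ (F 1) '' K₁ = K₂

/-- `K` has the knot type of the trefoil. -/
def IsTrefoil (K : Set E3) : Prop := KnotEquiv K TrefoilSet

/-- `K` is an unknot: it has the knot type of a planar circle. -/
def IsUnknot (K : Set E3) : Prop := KnotEquiv K UnknotSet

/-- The closed polygonal curve with vertices `v 0, …, v (n-1)` joined cyclically. -/
def polyCurve (n : ℕ) [NeZero n] (v : Fin n → E3) : Set E3 :=
  ⋃ i, segment ℝ (v i) (v (i + 1))

/-- `v` determines an embedded (simple) closed polygonal curve: distinct vertices,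
adjacent edges meet exactly at their common vertex, non-adjacent edges are disjoint. -/
def IsSimplePolygon (n : ℕ) [NeZero n] (v : Fin n → E3) : Prop :=
  3 ≤ n ∧ Function.Injective v ∧
  (∀ i : Fin n,
    segment ℝ (v i) (v (i + 1)) ∩ segment ℝ (v (i + 1)) (v (i + 2)) = {v (i + 1)}) ∧
  (∀ i j : Fin n, j ≠ i → j ≠ i + 1 → j + 1 ≠ i →
    segment ℝ (v i) (v (i + 1)) ∩ segment ℝ (v j) (v (j + 1)) = ∅)

namespace Hexagon

/-- The quadrisecant approximation determined by marked points `c i`, `d i` on edge `i`: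
`O i = [c i, d i]` (straightened part of edge `i`) and `N i = [d (i-1), c i]`
(the segment cutting the corner at `v i`). -/
def QA (H : Hexagon) (c d : Fin 6 → E3) : Set E3 :=
  (⋃ i, segment ℝ (c i) (d i)) ∪ (⋃ i, segment ℝ (d (i - 1)) (c i))

/-- `c i`, `d i` are exactly the quadrisecant points on edge `i`, occurring in the
order `v i, c i, d i, v (i+1)` along the edge. -/
def QAData (H : Hexagon) (c d : Fin 6 → E3) : Prop :=
  ∀ i : Fin 6,
    ({c i, d i} : Set E3) = H.edge i ∩ (H.QLine 0 ∪ H.QLine 1 ∪ H.QLine 2) ∧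
    Sbtw ℝ (H.v i) (c i) (d i) ∧ Sbtw ℝ (c i) (d i) (H.v (i + 1))

end Hexagon

/-- Auxiliary: a point in the affine span of three points makes a coplanar quadruple. -/
private lemma coplanar_aux {p a b c : E3} (h : p ∈ affineSpan ℝ ({a, b, c} : Set E3)) :
    Coplanar ℝ ({p, a, b, c} : Set E3) :=
  (coplanar_insert_iff_of_mem_affineSpan h).2 (coplanar_triple (k := ℝ) a b c)

/-- Auxiliary: a point of a segment lies in the affine span of the endpoints. -/
private lemma mem_span_pair {a b x : E3} (h : x ∈ segment ℝ a b) :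
    x ∈ affineSpan ℝ ({a, b} : Set E3) :=
  convexHull_subset_affineSpan _ (by rwa [convexHull_pair])

/-- Auxiliary: a segment meets an affine subspace missing an endpoint in at most one point. -/
private lemma seg_plane_unique {a b x z : E3} {T : AffineSubspace ℝ E3}
    (hx : x ∈ segment ℝ a b) (hz : z ∈ segment ℝ a b)
    (hxT : x ∈ T) (hzT : z ∈ T) (haT : a ∉ T) : x = z := by
  by_contra hne
  have hcol : Collinear ℝ ({x, z, a, b} : Set E3) :=
    collinear_insert_insert_of_mem_affineSpan_pair (mem_span_pair hx) (mem_span_pair hz)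
  have hmem : a ∈ affineSpan ℝ ({x, z} : Set E3) :=
    hcol.mem_affineSpan_of_mem_of_ne (by simp) (by simp) (by simp) hne
  exact haT (affineSpan_le.2 (by simp [Set.insert_subset_iff, hxT, hzT]) hmem)

/-- With `L2 = P3 ∩ P6` (= `QLine 1`) the quadrisecant meeting
`e23, e34, e56, e61`, the point `p²₂₃ = L2 ∩ e23` lies in the open half-space of `P5`
containing `v3`.  (Here `e23` is edge `1`, `v3` is `v 2`, `P5` is `P 4`.) -/
theorem stmt13 (H : Hexagon) (hgp : H.GeneralPosition) (hhj : H.HuhJeon)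
    (htre : IsTrefoil H.K) (x : E3) (hx : x ∈ H.edge 1 ∩ H.QLine 1) :
    (H.P 4).SSameSide x (H.v 2) := by
  obtain ⟨hx1, hx2⟩ := hx
  have i1 : (4 : Fin 6) - 1 = 3 := by decide
  have i2 : (4 : Fin 6) + 1 = 5 := by decide
  have i3 : (0 : Fin 6) - 1 = 5 := by decide
  have i4 : (0 : Fin 6) + 1 = 1 := by decide
  have i5 : (5 : Fin 6) - 1 = 4 := by decide
  have i6 : (5 : Fin 6) + 1 = 0 := by decide
  have i7 : (1 : Fin 6) + 1 = 2 := by decide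
  have i8 : (1 : Fin 6) + 4 = 5 := by decide
  have i9 : (3 : Fin 6) + 1 = 4 := by decide
  set s := H.P 4 with hs_def
  have hs : s = affineSpan ℝ ({H.v 3, H.v 4, H.v 5} : Set E3) := by
    rw [hs_def, Hexagon.P, i1, i2]
  set T := affineSpan ℝ ({H.v 4, H.v 5, H.v 0} : Set E3) with hT_def
  have hT : (H.P 5 : Set E3) = ↑T := by rw [Hexagon.P, i5, i6, hT_def]
  -- memberships of vertices
  have hv3 : H.v 3 ∈ s := by rw [hs]; exact subset_affineSpan ℝ _ (by simp)
  have hv4 : H.v 4 ∈ s := by rw [hs]; exact subset_affineSpan ℝ _ (by simp)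
  have hv5 : H.v 5 ∈ s := by rw [hs]; exact subset_affineSpan ℝ _ (by simp)
  -- non-memberships from general position
  have h0s : H.v 0 ∉ s := by
    intro h; rw [hs] at h
    exact hgp.2 0 3 4 5 (by decide) (by decide) (by decide) (by decide) (by decide) (by decide)
      (coplanar_aux h)
  have h1s : H.v 1 ∉ s := by
    intro h; rw [hs] at h
    exact hgp.2 1 3 4 5 (by decide) (by decide) (by decide) (by decide) (by decide) (by decide)
      (coplanar_aux h)
  have h2s : H.v 2 ∉ s := by
    intro h; rw [hs] at h
    exact hgp.2 2 3 4 5 (by decide) (by decide) (by decide) (by decide) (by decide) (by decide)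
      (coplanar_aux h)
  have h1T : H.v 1 ∉ T := by
    intro h; rw [hT_def] at h
    exact hgp.2 1 4 5 0 (by decide) (by decide) (by decide) (by decide) (by decide) (by decide)
      (coplanar_aux h)
  -- rewrite the hypotheses on x
  rw [Hexagon.edge, i7] at hx1
  rw [Hexagon.QLine, i7, i8] at hx2
  have hxT : x ∈ T := by
    have h := hx2.2
    rw [hT] at h
    exact h
  -- the point y where e23 pierces Δ5 (Lean disk 4)
  obtain ⟨y, hy1, hy2⟩ := (hhj 1 4).2 (by simp)
  rw [Hexagon.intEdge, i7] at hy1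
  have hys : y ∈ s := by
    rw [hs]
    refine convexHull_subset_affineSpan _ ?_
    have h := intrinsicInterior_subset hy2
    rwa [Hexagon.disk, i1, i2] at h
  have hA : s.SOppSide (H.v 1) (H.v 2) :=
    ⟨(mem_segment_iff_wbtw.1 (openSegment_subset_segment ℝ _ _ hy1)).wOppSide₁₃ hys, h1s, h2s⟩
  -- the point q where e45 pierces Δ1 (Lean disk 0)
  obtain ⟨q, hq1, hq2⟩ := (hhj 3 0).2 (by simp)
  rw [Hexagon.intEdge, i9] at hq1
  have hq2' : q ∈ convexHull ℝ ({H.v 5, H.v 0, H.v 1} : Set E3) := by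
    have h := intrinsicInterior_subset hq2
    rwa [Hexagon.disk, i3, i4] at h
  have hqs : q ∈ s :=
    s.convex.segment_subset hv3 hv4 (openSegment_subset_segment ℝ _ _ hq1)
  rw [convexHull_insert (Set.insert_nonempty _ _), convexHull_pair] at hq2'
  obtain ⟨a, ha, u, hu, hqu⟩ := mem_convexJoin.1 hq2'
  rw [Set.mem_singleton_iff] at ha
  subst ha
  have hqv5 : q ≠ H.v 5 := by
    rintro rfl
    exact hgp.1 5 3 4 (by decide) (by decide) (by decide)
      (collinear_insert_of_mem_affineSpan_pair
        (mem_span_pair (openSegment_subset_segment ℝ _ _ hq1)))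
  rw [segment_eq_image_lineMap] at hqu
  obtain ⟨t, ht, hqt⟩ := hqu
  have ht0 : t ≠ 0 := by
    rintro rfl
    rw [AffineMap.lineMap_apply_zero] at hqt
    exact hqv5 hqt.symm
  have hus : u ∈ s := by
    have hkey : AffineMap.lineMap (H.v 5) q t⁻¹ = u := by
      rw [← hqt]
      simp only [AffineMap.lineMap_apply_module]
      match_scalars <;> field_simp <;> ring
    rw [← hkey]
    exact AffineMap.lineMap_mem t⁻¹ hv5 hqs
  have hu0 : u ≠ H.v 0 := fun h => h0s (h ▸ hus)
  have hu1 : u ≠ H.v 1 := fun h => h1s (h ▸ hus)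
  have hsb : Sbtw ℝ (H.v 0) u (H.v 1) := ⟨mem_segment_iff_wbtw.1 hu, hu0, hu1⟩
  have hB : s.SOppSide (H.v 0) (H.v 1) := hsb.sOppSide_of_notMem_of_mem h0s hus
  have hC : s.SSameSide (H.v 0) (H.v 2) := hB.trans hA
  -- the point z where e23 pierces Δ6 (Lean disk 5); x = z
  obtain ⟨z, hz1, hz2⟩ := (hhj 1 5).2 (by simp)
  rw [Hexagon.intEdge, i7] at hz1
  have hz2' : z ∈ convexHull ℝ ({H.v 4, H.v 5, H.v 0} : Set E3) := by
    have h := intrinsicInterior_subset hz2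
    rwa [Hexagon.disk, i5, i6] at h
  have hzT : z ∈ T := convexHull_subset_affineSpan _ hz2'
  have hxz : x = z :=
    seg_plane_unique hx1 (openSegment_subset_segment ℝ _ _ hz1) hxT hzT h1T
  -- x does not lie on the plane P5 (Lean s = P 4)
  have hxs : x ∉ s := by
    intro hxsmem
    by_cases hcol : Collinear ℝ ({x, H.v 4, H.v 5} : Set E3)
    · have hx4 : x ≠ H.v 4 := by
        rintro h
        exact hgp.1 4 1 2 (by decide) (by decide) (by decide)
          (collinear_insert_of_mem_affineSpan_pair (h ▸ mem_span_pair hx1))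
      have h5mem : H.v 5 ∈ affineSpan ℝ ({x, H.v 4} : Set E3) :=
        hcol.mem_affineSpan_of_mem_of_ne (by simp) (by simp) (by simp) hx4
      have hxspan : x ∈ affineSpan ℝ ({H.v 1, H.v 2, H.v 4} : Set E3) := by
        have h := mem_span_pair hx1
        exact affineSpan_mono ℝ (by intro p hp; simp at hp; rcases hp with h' | h' <;> simp [h']) h
      have h5mem' : H.v 5 ∈ affineSpan ℝ ({H.v 1, H.v 2, H.v 4} : Set E3) := by
        refine affineSpan_le.2 ?_ h5mem
        intro p hp
        simp only [Set.mem_insert_iff, Set.mem_singleton_iff] at hp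
        rcases hp with rfl | rfl
        · exact hxspan
        · exact subset_affineSpan ℝ _ (by simp)
      exact hgp.2 5 1 2 4 (by decide) (by decide) (by decide) (by decide) (by decide) (by decide)
        (coplanar_aux h5mem')
    · have hai : AffineIndependent ℝ ![x, H.v 4, H.v 5] :=
        affineIndependent_iff_not_collinear_set.2 hcol
      have hai345 : AffineIndependent ℝ ![H.v 3, H.v 4, H.v 5] :=
        affineIndependent_iff_not_collinear_set.2
          (hgp.1 3 4 5 (by decide) (by decide) (by decide))
      have hrange345 : Set.range ![H.v 3, H.v 4, H.v 5] = ({H.v 3, H.v 4, H.v 5} : Set E3) := by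
        ext p
        simp [Matrix.range_cons, Matrix.range_empty]
        tauto
      have hfr : Module.finrank ℝ s.direction = 2 := by
        rw [hs, direction_affineSpan, ← hrange345]
        exact hai345.finrank_vectorSpan (by simp)
      have hrange : Set.range ![x, H.v 4, H.v 5] = ({x, H.v 4, H.v 5} : Set E3) := by
        ext p
        simp [Matrix.range_cons, Matrix.range_empty]
        tauto
      have hle : affineSpan ℝ (Set.range ![x, H.v 4, H.v 5]) ≤ s := by
        rw [hrange]
        exact affineSpan_le.2 (by simp [Set.insert_subset_iff, hxsmem, hv4, hv5])
      have heq : affineSpan ℝ (Set.range ![x, H.v 4, H.v 5]) = s :=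
        hai.affineSpan_eq_of_le_of_card_eq_finrank_add_one hle (by simp [hfr])
      have hleT : affineSpan ℝ (Set.range ![x, H.v 4, H.v 5]) ≤ T := by
        rw [hrange]
        refine affineSpan_le.2 ?_
        have h4T : H.v 4 ∈ T := subset_affineSpan ℝ _ (by simp)
        have h5T : H.v 5 ∈ T := subset_affineSpan ℝ _ (by simp)
        simp [Set.insert_subset_iff, hxT, h4T, h5T]
      have h3T : H.v 3 ∈ T := by
        rw [← heq] at hv3
        exact hleT hv3
      exact hgp.2 3 4 5 0 (by decide) (by decide) (by decide) (by decide) (by decide) (by decide)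
        (coplanar_aux h3T)
  -- finish: x is strictly on the same side of P5 as v1 (Lean v 0)
  rw [← hxz] at hz2'
  rw [convexHull_insert (Set.insert_nonempty _ _), convexHull_pair] at hz2'
  obtain ⟨a, ha, w, hw, hxw⟩ := mem_convexJoin.1 hz2'
  rw [Set.mem_singleton_iff] at ha
  subst ha
  have hwns : w ∉ s := fun hwmem => hxs (s.convex.segment_subset hv4 hwmem hxw)
  have W1 : s.WSameSide x w := (mem_segment_iff_wbtw.1 hxw).wSameSide₂₃ hv4
  have W2 : s.WSameSide w (H.v 0) := (mem_segment_iff_wbtw.1 hw).wSameSide₂₃ hv5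
  have hx0 : s.SSameSide x (H.v 0) := ⟨W1.trans W2 hwns, hxs, h0s⟩
  exact hx0.trans hC
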